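/- Let p ≥ 1 and let u : ℤ → (ℕ → ℝ) assign to each grid index α a sequence of 'finite-difference derivatives' u α J, and let h : ℤ → ℝ be step sizes. Suppose for every α and every J ≤ p the forward relation u (α+1) J = u α J + ∑_{k=1}^{p-J} (ε^k / k!) * (h α)^k * u α (J+k) + o(ε^{p-J}) holds as ε → 0. Then for any β ≥ 1 and J ≤ p, u (α+β) J = u α J + ∑_{k=1}^{p-J} (ε^k / k!) * (H α β)^k * u α (J+k) + o(ε^{p-J}), where H α β = ∑_{i=α}^{α+β-1} h i. -/

import Mathlib

open Filter Finset

open Asymptotics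

private lemma binom_div (x y : ℝ) (m : ℕ) :
    (x + y) ^ m / (Nat.factorial m : ℝ)
      = ∑ k ∈ Finset.range (m + 1),
          x ^ k * y ^ (m - k) / ((Nat.factorial k : ℝ) * (Nat.factorial (m - k) : ℝ)) := by
  rw [add_pow, Finset.sum_div]
  refine Finset.sum_congr rfl fun k hk => ?_
  have hk' : k ≤ m := Nat.lt_succ_iff.mp (Finset.mem_range.mp hk)
  have h2 : ((m.choose k : ℝ)) * (Nat.factorial k : ℝ) * (Nat.factorial (m - k) : ℝ)
      = (Nat.factorial m : ℝ) := by
    exact_mod_cast congrArg (fun t : ℕ => (t : ℝ)) (Nat.choose_mul_factorial_mul_factorial hk')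
  have hk0 : (Nat.factorial k : ℝ) ≠ 0 := Nat.cast_ne_zero.mpr (Nat.factorial_ne_zero k)
  have hmk0 : (Nat.factorial (m - k) : ℝ) ≠ 0 := Nat.cast_ne_zero.mpr (Nat.factorial_ne_zero _)
  have hm0 : (Nat.factorial m : ℝ) ≠ 0 := Nat.cast_ne_zero.mpr (Nat.factorial_ne_zero m)
  rw [div_eq_div_iff hm0 (mul_ne_zero hk0 hmk0)]
  linear_combination (x ^ k * y ^ (m - k)) * h2

private lemma key_identity (ε H hh : ℝ) (c : ℕ → ℝ) (n : ℕ) :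
    ∑ m ∈ Finset.Icc 1 n, ε ^ m / (Nat.factorial m : ℝ) * (H + hh) ^ m * c m
      = (∑ m ∈ Finset.Icc 1 n, ε ^ m / (Nat.factorial m : ℝ) * H ^ m * c m)
        + ∑ k ∈ Finset.Icc 1 n, ε ^ k / (Nat.factorial k : ℝ) * hh ^ k *
            (c k + ∑ j ∈ Finset.Icc 1 (n - k),
                ε ^ j / (Nat.factorial j : ℝ) * H ^ j * c (k + j)) := by
  induction n with
  | zero => simp
  | succ n ih =>
    rw [Finset.sum_Icc_succ_top (by omega : 1 ≤ n+1),
        Finset.sum_Icc_succ_top (by omega : 1 ≤ n+1),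
        Finset.sum_Icc_succ_top (by omega : 1 ≤ n+1)]
    -- split the last big sum over Icc 1 n
    have hsplit : ∑ k ∈ Finset.Icc 1 n, ε ^ k / (Nat.factorial k : ℝ) * hh ^ k *
            (c k + ∑ j ∈ Finset.Icc 1 (n + 1 - k),
                ε ^ j / (Nat.factorial j : ℝ) * H ^ j * c (k + j))
        = (∑ k ∈ Finset.Icc 1 n, ε ^ k / (Nat.factorial k : ℝ) * hh ^ k *
            (c k + ∑ j ∈ Finset.Icc 1 (n - k),
                ε ^ j / (Nat.factorial j : ℝ) * H ^ j * c (k + j)))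
          + ∑ k ∈ Finset.Icc 1 n, ε ^ (n+1) *
              (hh ^ k * H ^ (n - k + 1) /
                ((Nat.factorial k : ℝ) * (Nat.factorial (n - k + 1) : ℝ))) * c (n+1) := by
      rw [← Finset.sum_add_distrib]
      refine Finset.sum_congr rfl fun k hk => ?_
      obtain ⟨hk1, hk2⟩ := Finset.mem_Icc.mp hk
      have h1 : n + 1 - k = (n - k) + 1 := by omega
      rw [h1, Finset.sum_Icc_succ_top (by omega : 1 ≤ (n-k)+1)]
      have h2 : k + (n - k + 1) = n + 1 := by omega
      rw [h2]
      have h3 : ε ^ k * ε ^ (n - k + 1) = ε ^ (n+1) := by rw [← pow_add, h2]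
      linear_combination (hh ^ k * H ^ (n - k + 1) * c (n+1) /
        ((Nat.factorial k : ℝ) * (Nat.factorial (n - k + 1) : ℝ))) * h3
    rw [hsplit]
    -- binomial identity for the new top coefficients
    have hsumB : ∑ k ∈ Finset.Icc 1 n, hh ^ k * H ^ (n - k + 1) /
          ((Nat.factorial k : ℝ) * (Nat.factorial (n - k + 1) : ℝ))
        = ∑ i ∈ Finset.range n, hh ^ (i+1) * H ^ (n + 1 - (i+1)) /
            ((Nat.factorial (i+1) : ℝ) * (Nat.factorial (n + 1 - (i+1)) : ℝ)) := by
      rw [← Finset.Ico_add_one_right_eq_Icc, Finset.sum_Ico_eq_sum_range]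
      refine Finset.sum_congr rfl fun i hi => ?_
      have hi' : i < n := Finset.mem_range.mp hi
      have e1 : 1 + i = i + 1 := by omega
      have e2 : n - (i + 1) + 1 = n + 1 - (i + 1) := by omega
      rw [e1, e2]
    have hb := binom_div hh H (n+1)
    rw [Finset.sum_range_succ, Finset.sum_range_succ'] at hb
    simp only [Nat.sub_self, Nat.sub_zero, pow_zero, Nat.factorial_zero, Nat.cast_one,
      mul_one, one_mul] at hb
    have hbin' : (H + hh) ^ (n+1) / (Nat.factorial (n+1) : ℝ)
        = H ^ (n+1) / (Nat.factorial (n+1) : ℝ)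
          + (∑ k ∈ Finset.Icc 1 n, hh ^ k * H ^ (n - k + 1) /
              ((Nat.factorial k : ℝ) * (Nat.factorial (n - k + 1) : ℝ)))
          + hh ^ (n+1) / (Nat.factorial (n+1) : ℝ) := by
      rw [hsumB, add_comm H hh]
      linear_combination hb
    have hB : ∑ k ∈ Finset.Icc 1 n, ε ^ (n+1) *
          (hh ^ k * H ^ (n - k + 1) /
            ((Nat.factorial k : ℝ) * (Nat.factorial (n - k + 1) : ℝ))) * c (n+1)
        = ε ^ (n+1) * (∑ k ∈ Finset.Icc 1 n, hh ^ k * H ^ (n - k + 1) /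
            ((Nat.factorial k : ℝ) * (Nat.factorial (n - k + 1) : ℝ))) * c (n+1) := by
      rw [Finset.mul_sum, Finset.sum_mul]
    rw [hB, Nat.sub_self, Finset.Icc_eq_empty (by omega : ¬ (1:ℕ) ≤ 0), Finset.sum_empty]
    linear_combination ih + (ε ^ (n+1) * c (n+1)) * hbin'

private lemma tendsto_iff_o (f : ℝ → ℝ) (n : ℕ) :
    Tendsto (fun ε => f ε / ε ^ n) (nhdsWithin (0:ℝ) {0}ᶜ) (nhds 0) ↔
      f =o[nhdsWithin (0:ℝ) {0}ᶜ] (fun ε => ε ^ n) := by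
  refine (Asymptotics.isLittleO_iff_tendsto' ?_).symm
  filter_upwards [self_mem_nhdsWithin] with ε hε hpow
  exact absurd hpow (pow_ne_zero n (by simpa using hε))

private lemma step_lemma (p : ℕ) (u : ℤ → ℕ → ℝ) (h : ℤ → ℝ)
    (hyp : ∀ α : ℤ, ∀ J : ℕ, J ≤ p →
      (fun ε : ℝ => u (α + 1) J - u α J -
          ∑ k ∈ Finset.Icc 1 (p - J),
            ε ^ k / (Nat.factorial k : ℝ) * (h α) ^ k * u α (J + k))
        =o[nhdsWithin (0:ℝ) {0}ᶜ] (fun ε => ε ^ (p - J)))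
    (α γ : ℤ) (H : ℝ)
    (ih : ∀ J : ℕ, J ≤ p →
      (fun ε : ℝ => u γ J - u α J -
          ∑ k ∈ Finset.Icc 1 (p - J),
            ε ^ k / (Nat.factorial k : ℝ) * H ^ k * u α (J + k))
        =o[nhdsWithin (0:ℝ) {0}ᶜ] (fun ε => ε ^ (p - J))) :
    ∀ J : ℕ, J ≤ p →
      (fun ε : ℝ => u (γ + 1) J - u α J -
          ∑ k ∈ Finset.Icc 1 (p - J),
            ε ^ k / (Nat.factorial k : ℝ) * (H + h γ) ^ k * u α (J + k))
        =o[nhdsWithin (0:ℝ) {0}ᶜ] (fun ε => ε ^ (p - J)) := by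
  intro J hJ
  set n := p - J with hn
  set l := nhdsWithin (0:ℝ) {0}ᶜ
  set f1 : ℝ → ℝ := fun ε => u (γ + 1) J - u γ J -
      ∑ k ∈ Finset.Icc 1 n, ε ^ k / (Nat.factorial k : ℝ) * (h γ) ^ k * u γ (J + k) with hf1def
  set f2 : ℝ → ℝ := fun ε => u γ J - u α J -
      ∑ k ∈ Finset.Icc 1 n, ε ^ k / (Nat.factorial k : ℝ) * H ^ k * u α (J + k) with hf2def
  set f3 : ℝ → ℝ := fun ε => ∑ k ∈ Finset.Icc 1 n,
      ε ^ k / (Nat.factorial k : ℝ) * (h γ) ^ k *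
        (u γ (J + k) - u α (J + k) -
          ∑ j ∈ Finset.Icc 1 (p - (J + k)),
            ε ^ j / (Nat.factorial j : ℝ) * H ^ j * u α (J + k + j)) with hf3def
  have hf1 : f1 =o[l] fun ε => ε ^ n := hyp γ J hJ
  have hf2 : f2 =o[l] fun ε => ε ^ n := ih J hJ
  have hf3 : f3 =o[l] fun ε => ε ^ n := by
    refine Asymptotics.IsLittleO.fun_sum fun k hk => ?_
    obtain ⟨hk1, hk2⟩ := Finset.mem_Icc.mp hk
    have hJk : J + k ≤ p := by omega
    have e := ih (J + k) hJk
    have h1 : (fun ε : ℝ => ε ^ k) =O[l] (fun ε : ℝ => ε ^ k) := isBigO_refl _ _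
    have h2 := h1.mul_isLittleO e
    have h3 : (fun ε : ℝ => ε ^ k * ε ^ (p - (J + k))) = (fun ε : ℝ => ε ^ n) := by
      funext ε; rw [← pow_add]; congr 1; omega
    rw [h3] at h2
    have h4 := h2.const_mul_left ((h γ) ^ k / (Nat.factorial k : ℝ))
    refine h4.congr_left fun ε => by ring
  have hsum := (hf1.add hf2).add hf3
  refine hsum.congr_left fun ε => ?_
  have h3eq : f3 ε =
      (∑ k ∈ Finset.Icc 1 n, ε ^ k / (Nat.factorial k : ℝ) * (h γ) ^ k * u γ (J + k))
      - ∑ k ∈ Finset.Icc 1 n, ε ^ k / (Nat.factorial k : ℝ) * (h γ) ^ k *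
          (u α (J + k) + ∑ j ∈ Finset.Icc 1 (n - k),
              ε ^ j / (Nat.factorial j : ℝ) * H ^ j * u α (J + (k + j))) := by
    rw [hf3def, ← Finset.sum_sub_distrib]
    refine Finset.sum_congr rfl fun k hk => ?_
    obtain ⟨hk1, hk2⟩ := Finset.mem_Icc.mp hk
    have e1 : p - (J + k) = n - k := by omega
    rw [e1]
    have e2 : ∀ j ∈ Finset.Icc 1 (n - k),
        ε ^ j / (Nat.factorial j : ℝ) * H ^ j * u α (J + k + j)
          = ε ^ j / (Nat.factorial j : ℝ) * H ^ j * u α (J + (k + j)) := by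
      intro j _; rw [Nat.add_assoc]
    rw [Finset.sum_congr rfl e2]
    ring
  have hkey := key_identity ε H (h γ) (fun m => u α (J + m)) n
  rw [h3eq]
  simp only [hf1def, hf2def]
  linarith [hkey]

/-- Lemma 1 (forward case): one-step little-o Taylor-like expansion relations for
finite-difference derivatives propagate to multi-step expansions with the
accumulated step size `H α β = ∑_{i=α}^{α+β-1} h i`. -/
theorem fd_expansion_forward
    (p : ℕ) (hp : 1 ≤ p)
    (u : ℤ → ℕ → ℝ) (h : ℤ → ℝ)
    (hyp : ∀ α : ℤ, ∀ J : ℕ, J ≤ p →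
      Tendsto (fun ε : ℝ =>
          (u (α + 1) J - u α J -
            ∑ k ∈ Finset.Icc 1 (p - J),
              ε ^ k / (Nat.factorial k : ℝ) * (h α) ^ k * u α (J + k)) / ε ^ (p - J))
        (nhdsWithin 0 {0}ᶜ) (nhds 0)) :
    ∀ α : ℤ, ∀ β : ℕ, 1 ≤ β → ∀ J : ℕ, J ≤ p →
      Tendsto (fun ε : ℝ =>
          (u (α + β) J - u α J -
            ∑ k ∈ Finset.Icc 1 (p - J),
              ε ^ k / (Nat.factorial k : ℝ) *
                (∑ i ∈ Finset.Icc α (α + β - 1), h i) ^ k * u α (J + k)) / ε ^ (p - J))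
        (nhdsWithin 0 {0}ᶜ) (nhds 0) := by
  have hyp' : ∀ γ : ℤ, ∀ J : ℕ, J ≤ p →
      (fun ε : ℝ => u (γ + 1) J - u γ J -
          ∑ k ∈ Finset.Icc 1 (p - J),
            ε ^ k / (Nat.factorial k : ℝ) * (h γ) ^ k * u γ (J + k))
        =o[nhdsWithin (0:ℝ) {0}ᶜ] (fun ε => ε ^ (p - J)) :=
    fun γ J hJ => (tendsto_iff_o _ _).mp (hyp γ J hJ)
  intro α β hβ J hJ
  rw [tendsto_iff_o]
  have main : ∀ b : ℕ, ∀ J : ℕ, J ≤ p →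
      (fun ε : ℝ => u (α + (b : ℤ)) J - u α J -
          ∑ k ∈ Finset.Icc 1 (p - J),
            ε ^ k / (Nat.factorial k : ℝ) *
              (∑ i ∈ Finset.Icc α (α + (b : ℤ) - 1), h i) ^ k * u α (J + k))
        =o[nhdsWithin (0:ℝ) {0}ᶜ] (fun ε => ε ^ (p - J)) := by
    intro b
    induction b with
    | zero =>
      intro J hJ
      have h1 : Finset.Icc α (α + ((0:ℕ) : ℤ) - 1) = ∅ :=
        Finset.Icc_eq_empty (by omega)
      have h2 : (fun ε : ℝ => u (α + ((0:ℕ) : ℤ)) J - u α J -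
          ∑ k ∈ Finset.Icc 1 (p - J),
            ε ^ k / (Nat.factorial k : ℝ) *
              (∑ i ∈ Finset.Icc α (α + ((0:ℕ) : ℤ) - 1), h i) ^ k * u α (J + k))
          = fun _ => (0:ℝ) := by
        funext ε
        rw [h1]
        simp only [Finset.sum_empty, Nat.cast_zero, add_zero]
        rw [Finset.sum_eq_zero, sub_zero, sub_self]
        intro k hk
        obtain ⟨hk1, _⟩ := Finset.mem_Icc.mp hk
        rw [zero_pow (by omega)]
        ring
      rw [h2]
      exact isLittleO_zero _ _
    | succ b ih =>
      have hstep := step_lemma p u h hyp' α (α + (b:ℤ))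
        (∑ i ∈ Finset.Icc α (α + (b:ℤ) - 1), h i) ih
      intro J hJ
      have hc : (α + (((b:ℕ)+1 : ℕ) : ℤ)) = (α + (b:ℤ)) + 1 := by push_cast; ring
      have hins : Finset.Icc α (α + (b:ℤ)) =
          insert (α + (b:ℤ)) (Finset.Icc α (α + (b:ℤ) - 1)) := by
        ext x
        simp only [Finset.mem_Icc, Finset.mem_insert]
        omega
      have e : α + (b:ℤ) + 1 - 1 = α + (b:ℤ) := by ring
      rw [hc, e, hins, Finset.sum_insert (by simp),
        add_comm (h (α + (b:ℤ))) (∑ i ∈ Finset.Icc α (α + (b:ℤ) - 1), h i)]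
      exact hstep J hJ
  exact main β J hJ
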